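/- Fix t > 0 and nonzero reals {μ(i,j)}_{i<j}. With σ_x := [[1,0],[0,√t·x]], γ := [[0,1],[0,0]], * the transpose, b_{n,i} := σ_{μ(1,i)} ⊗ … ⊗ σ_{μ(i−1,i)} ⊗ γ ⊗ σ₁^{⊗(n−i)} ∈ M₂(ℝ)^{⊗n} ≅ M_{2ⁿ}(ℝ), and φ_n(a) := ⟨a e₀, e₀⟩ with e₀ the first standard basis vector of ℝ^{2ⁿ}, the functional φ_n factors over naturally ordered products in the sequence b_{n,1}, …, b_{n,n}: whenever i(1),…,i(m) ∈ {1,…,n} are such that equal indices occur in consecutive positions and the distinct index values appear in increasing order, with consecutive blocks of equal indices of lengths k₁, k₂−k₁, …, then φ_n(b_{n,i(1)}^{ε(1)} ⋯ b_{n,i(m)}^{ε(m)}) = φ_n(b_{n,i(1)}^{ε(1)} ⋯ b_{n,i(k₁)}^{ε(k₁)}) ⋯ φ_n(b_{n,i(k_{ℓ−1}+1)}^{ε(k_{ℓ−1}+1)} ⋯ b_{n,i(k_ℓ)}^{ε(k_ℓ)}) for all ε(1),…,ε(m) ∈ {1,*}. -/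

import Mathlib

open Filter MeasureTheory ProbabilityTheory
open scoped BigOperators ComplexOrder Classical

noncomputable section

/-- `sel a e` is `a^ε`: `a` if `e = false` (i.e. ε = 1) and `star a` if `e = true` (i.e. ε = ∗). -/
def sel {A : Type*} [Star A] (a : A) (e : Bool) : A := if e then star a else a

/-- The product `b_{i(1)}^{ε(1)} ⋯ b_{i(r)}^{ε(r)}`, indexed by a list of (index, exponent) pairs. -/
def listProd {A : Type*} [Monoid A] [Star A] (b : ℕ → A) (l : List (ℕ × Bool)) : A :=
  (l.map fun p => sel (b p.1) p.2).prod

/-- The product `b_{i(1)}^{ε(1)} ⋯ b_{i(r)}^{ε(r)}`, indexed by `Fin r`. -/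
def tupProd {A : Type*} [Monoid A] [Star A] (b : ℕ → A) {r : ℕ}
    (i : Fin r → ℕ) (eps : Fin r → Bool) : A :=
  (List.ofFn fun k => sel (b (i k)) (eps k)).prod

/-- The mixed moment `φ(X^{ε(1)} ⋯ X^{ε(r)})` of a single element `X`. -/
def smom {A : Type*} [Ring A] [StarRing A] [Algebra ℂ A] (φ : A →ₗ[ℂ] ℂ)
    (X : A) {r : ℕ} (eps : Fin r → Bool) : ℂ :=
  φ ((List.ofFn fun k => sel X (eps k)).prod)

/-- The commutation coefficients are nonzero reals. -/
def NonzeroCoeff (c : Bool → Bool → ℕ → ℕ → ℝ) : Prop :=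
  ∀ i j : ℕ, i ≠ j → ∀ e e' : Bool, c e e' i j ≠ 0

/-- Relations (A)–(B) on the commutation coefficients (`false` = 1, `true` = ∗):
`μ_{ε,ε'}(i,j) = 1/μ_{ε',ε}(j,i)`, `μ_{1,1}(i,j) = 1/μ_{∗,∗}(i,j)`,
`μ_{1,∗}(i,j) = 1/μ_{∗,1}(i,j)`. -/
def RelAB (c : Bool → Bool → ℕ → ℕ → ℝ) : Prop :=
  (∀ i j : ℕ, i ≠ j → ∀ e e' : Bool, c e e' i j = (c e' e j i)⁻¹) ∧
  (∀ i j : ℕ, i ≠ j → c false false i j = (c true true i j)⁻¹) ∧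
  (∀ i j : ℕ, i ≠ j → c false true i j = (c true false i j)⁻¹)

/-- Condition (★) for a sequence `b` in a complex ∗-probability space, with
commutation coefficients `c e e' i j = μ_{ε,ε'}(i,j)` (`false` = 1, `true` = ∗).
The factoring over naturally ordered products is stated in block form: a naturally
ordered product is a concatenation of nonempty blocks with constant indices, the
(distinct) block indices being strictly increasing. -/
structure StarCond {A : Type*} [Ring A] [StarRing A] [Algebra ℂ A]
    (φ : A →ₗ[ℂ] ℂ) (b : ℕ → A) (c : Bool → Bool → ℕ → ℕ → ℝ) : Prop where
  zero_mean : ∀ i, φ (b i) = 0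
  zero_mean_star : ∀ i, φ (star (b i)) = 0
  zero_bb : ∀ i, φ (b i * b i) = 0
  zero_ss : ∀ i, φ (star (b i) * star (b i)) = 0
  zero_sb : ∀ i, φ (star (b i) * b i) = 0
  covar : ∀ i j : ℕ, ∀ e e' : Bool,
    φ (sel (b i) e * sel (b i) e') = φ (sel (b j) e * sel (b j) e')
  bounded : ∀ r : ℕ, ∃ α : ℝ, 0 ≤ α ∧ ∀ l : List (ℕ × Bool), l.length = r →
    ‖φ (listProd b l)‖ ≤ α
  factors : ∀ L : List (ℕ × List Bool),
    List.Chain' (· < ·) (L.map Prod.fst) → (∀ p ∈ L, p.2 ≠ []) →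
    φ ((L.map fun p => (p.2.map (sel (b p.1))).prod).prod)
      = (L.map fun p => φ ((p.2.map (sel (b p.1))).prod)).prod
  commRel : ∀ i j : ℕ, i ≠ j → ∀ e e' : Bool,
    sel (b i) e * sel (b j) e' = ((c e' e j i : ℝ) : ℂ) • (sel (b j) e' * sel (b i) e)

/-- The normalized partial sum `S_N = (b 1 + ⋯ + b N)/√N`. -/
def pSum {A : Type*} [Ring A] [Algebra ℂ A] (b : ℕ → A) (N : ℕ) : A :=
  (((Real.sqrt N)⁻¹ : ℝ) : ℂ) • ∑ i ∈ Finset.Icc 1 N, b i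

/-- A pair partition `V = {(w 1, z 1), …, (w n, z n)}` of `{1, …, 2n}` (here of `Fin (2n)`),
with `w i < z i`, `w` strictly increasing, and the `w i, z i` exhausting `Fin (2n)`. -/
structure PairPartition (n : ℕ) where
  w : Fin n → Fin (2 * n)
  z : Fin n → Fin (2 * n)
  wz : ∀ i, w i < z i
  mono : StrictMono w
  bij : Function.Bijective fun p : Fin n × Bool => if p.2 then z p.1 else w p.1

instance (n : ℕ) : Fintype (PairPartition n) :=
  Fintype.ofInjective (fun V : PairPartition n => (V.w, V.z)) (by
    rintro ⟨w₁, z₁, h₁, h₂, h₃⟩ ⟨w₂, z₂, g₁, g₂, g₃⟩ h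
    simp only [Prod.mk.injEq] at h
    obtain ⟨rfl, rfl⟩ := h
    rfl)

/-- The crossings of a pair partition: pairs of blocks `(j, k)` with `w j < w k < z j < z k`. -/
def crossSet {n : ℕ} (V : PairPartition n) : Finset (Fin n × Fin n) :=
  Finset.univ.filter fun p => V.w p.1 < V.w p.2 ∧ V.w p.2 < V.z p.1 ∧ V.z p.1 < V.z p.2

/-- The nestings of a pair partition: pairs of blocks `(j, m)` with `w j < w m < z m < z j`. -/
def nestSet {n : ℕ} (V : PairPartition n) : Finset (Fin n × Fin n) :=
  Finset.univ.filter fun p => V.w p.1 < V.w p.2 ∧ V.w p.2 < V.z p.2 ∧ V.z p.2 < V.z p.1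

/-- `cross(V)`, the number of crossings. -/
def crossNum {n : ℕ} (V : PairPartition n) : ℕ := (crossSet V).card

/-- `nest(V)`, the number of nestings. -/
def nestNum {n : ℕ} (V : PairPartition n) : ℕ := (nestSet V).card

/-- Two positions lie in the same block of the pair partition `V`. -/
def sameBlock {n : ℕ} (V : PairPartition n) (k₁ k₂ : Fin (2 * n)) : Prop :=
  k₁ = k₂ ∨ ∃ m, (k₁ = V.w m ∧ k₂ = V.z m) ∨ (k₁ = V.z m ∧ k₂ = V.w m)

/-- `(i(1), …, i(2n)) ∼ V`: entries agree exactly on the blocks of `V`. -/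
def tupleEquiv {n : ℕ} {α : Type*} (V : PairPartition n) (i : Fin (2 * n) → α) : Prop :=
  ∀ k₁ k₂, i k₁ = i k₂ ↔ sameBlock V k₁ k₂

/-- The tuples in `[N]^{2n} = {1, …, N}^{2n}` that are equivalent to `V`. -/
def tuples (n N : ℕ) (V : PairPartition n) : Finset (Fin (2 * n) → ℕ) :=
  (Fintype.piFinset fun _ : Fin (2 * n) => Finset.Icc 1 N).filter fun i => tupleEquiv V i

/-- `β^{ε(1),…,ε(2n)}_{i(1),…,i(2n)}`: the product over crossings of `V` of
`μ_{ε(z_j),ε(w_k)}(i(z_j),i(w_k))` times the product over nestings of `V` of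
`μ_{ε(z_j),ε(z_m)}(i(z_j),i(z_m)) · μ_{ε(z_j),ε(w_m)}(i(z_j),i(w_m))`. -/
def betaProd (n : ℕ) (V : PairPartition n) (eps : Fin (2 * n) → Bool)
    (c : Bool → Bool → ℕ → ℕ → ℝ) (i : Fin (2 * n) → ℕ) : ℝ :=
  (∏ p ∈ crossSet V, c (eps (V.z p.1)) (eps (V.w p.2)) (i (V.z p.1)) (i (V.w p.2))) *
  ∏ p ∈ nestSet V,
    c (eps (V.z p.1)) (eps (V.z p.2)) (i (V.z p.1)) (i (V.z p.2)) *
      c (eps (V.z p.1)) (eps (V.w p.2)) (i (V.z p.1)) (i (V.w p.2))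

/-- `X_N = N^{-n} Σ_{(i(1),…,i(2n)) ∼ V} β^{ε(1),…,ε(2n)}_{i(1),…,i(2n)}`, whose limit
(when it exists) is `λ_{V,ε(1),…,ε(2n)}`. -/
def lambdaSum (n : ℕ) (V : PairPartition n) (eps : Fin (2 * n) → Bool)
    (c : Bool → Bool → ℕ → ℕ → ℝ) (N : ℕ) : ℝ :=
  ((N : ℝ)⁻¹) ^ n * ∑ i ∈ tuples n N V, betaProd n V eps c i

/-- One-pair standard prescription: for `x = μ(i,j)` (with `i < j`),
`μ_{∗,∗} = x`, `μ_{∗,1} = t·x`, `μ_{1,1} = x⁻¹`, `μ_{1,∗} = (t·x)⁻¹`. -/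
def prescOne (t x : ℝ) (e e' : Bool) : ℝ :=
  if e then (if e' then x else t * x) else (if e' then (t * x)⁻¹ else x⁻¹)

/-- The standard prescription of commutation coefficients from `{μ(i,j)}_{i<j}`,
extended to `i > j` by `μ_{ε',ε}(j,i) = 1/μ_{ε,ε'}(i,j)`. -/
def presc (t : ℝ) (m : ℕ → ℕ → ℝ) (e e' : Bool) (i j : ℕ) : ℝ :=
  if i < j then prescOne t (m i j) e e' else (prescOne t (m j i) e' e)⁻¹

/-- The index set `{(i,j) : 1 ≤ i < j}` of the random commutation coefficients. -/
def PairIdx : Type := {p : ℕ × ℕ // 1 ≤ p.1 ∧ p.1 < p.2}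

/-- `σ_x = [[1,0],[0,√t·x]]`. -/
def sigmaM (t x : ℝ) : Matrix (Fin 2) (Fin 2) ℝ := !![1, 0; 0, Real.sqrt t * x]

/-- `γ = [[0,1],[0,0]]`. -/
def gammaM : Matrix (Fin 2) (Fin 2) ℝ := !![0, 1; 0, 0]

/-- The two-parameter Jordan–Wigner matrix
`b_{n,i} = σ_{μ(1,i)} ⊗ ⋯ ⊗ σ_{μ(i-1,i)} ⊗ γ ⊗ σ₁^{⊗(n-i)} ∈ M₂(ℝ)^{⊗n}`,
realized on the index set `Fin n → Fin 2` (tensor/Kronecker products of matrices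
have entries the products of the entries of the factors). -/
def jw (t : ℝ) (m : ℕ → ℕ → ℝ) (n i : ℕ) : Matrix (Fin n → Fin 2) (Fin n → Fin 2) ℝ :=
  Matrix.of fun x y => ∏ k : Fin n,
    (if (k : ℕ) + 1 < i then sigmaM t (m ((k : ℕ) + 1) i)
     else if (k : ℕ) + 1 = i then gammaM
     else sigmaM t 1) (x k) (y k)

/-- `φ_n(a) = ⟨a e₀, e₀⟩ = a₀₀`. -/
def phiM (n : ℕ) (a : Matrix (Fin n → Fin 2) (Fin n → Fin 2) ℝ) : ℝ :=
  a (fun _ => 0) (fun _ => 0)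

/-- The normalized partial sum `S_N = (b_{N,1} + ⋯ + b_{N,N})/√N` of Jordan–Wigner matrices. -/
def jwS (t : ℝ) (m : ℕ → ℕ → ℝ) (N : ℕ) : Matrix (Fin N → Fin 2) (Fin N → Fin 2) ℝ :=
  (Real.sqrt N)⁻¹ • ∑ i ∈ Finset.Icc 1 N, jw t m N i

namespace JWAux

abbrev M2 := Matrix (Fin 2) (Fin 2) ℝ

/-- diagonal 2×2 matrix -/
def Diag2 (M : M2) : Prop := M 0 1 = 0 ∧ M 1 0 = 0

lemma diag2_sel {M : M2} (h : Diag2 M) (e : Bool) : Diag2 (sel M e) := by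
  cases e <;> simp [sel, Diag2, Matrix.star_apply, h.1, h.2]

lemma diag2_one : Diag2 (1 : M2) := by constructor <;> simp [Matrix.one_apply]

lemma diag2_mul {M N : M2} (hM : Diag2 M) (hN : Diag2 N) : Diag2 (M * N) := by
  constructor <;>
    simp [Matrix.mul_apply, Fin.sum_univ_two, hM.1, hM.2, hN.1, hN.2]

lemma diag2_list_prod {l : List M2} (h : ∀ M ∈ l, Diag2 M) : Diag2 l.prod := by
  induction l with
  | nil => exact diag2_one
  | cons a l ih =>
    rw [List.prod_cons]
    exact diag2_mul (h a (by simp)) (ih fun M hM => h M (by simp [hM]))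

lemma diag2_sigma (t x : ℝ) : Diag2 (sigmaM t x) := by
  constructor <;> simp [sigmaM]

lemma prod00 {l : List M2} (h : l.Pairwise fun M N => Diag2 M ∨ Diag2 N) :
    l.prod 0 0 = (l.map fun M => M 0 0).prod := by
  induction l with
  | nil => simp [Matrix.one_apply]
  | cons a l ih =>
    rw [List.pairwise_cons] at h
    have hrest := ih h.2
    have hmul : (a * l.prod) 0 0 = a 0 0 * l.prod 0 0 + a 0 1 * l.prod 1 0 := by
      simp [Matrix.mul_apply, Fin.sum_univ_two]
    by_cases ha : Diag2 a
    · simp [List.prod_cons, hmul, ha.1, hrest]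
    · have hall : ∀ N ∈ l, Diag2 N := fun N hN => (h.1 N hN).resolve_left ha
      have h10 := (diag2_list_prod hall).2
      simp [List.prod_cons, hmul, h10, hrest]

/-- elementary tensor -/
def tens {n : ℕ} (f : Fin n → M2) : Matrix (Fin n → Fin 2) (Fin n → Fin 2) ℝ :=
  Matrix.of fun x y => ∏ k, f k (x k) (y k)

lemma tens_mul {n : ℕ} (f g : Fin n → M2) :
    tens f * tens g = tens fun k => f k * g k := by
  ext x y
  simp only [tens, Matrix.mul_apply, Matrix.of_apply]
  rw [Finset.prod_univ_sum, Fintype.piFinset_univ]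
  exact Finset.sum_congr rfl fun z _ => (Finset.prod_mul_distrib).symm

lemma tens_one {n : ℕ} : tens (fun _ : Fin n => (1 : M2)) = 1 := by
  ext x y
  simp only [tens, Matrix.of_apply, Matrix.one_apply]
  by_cases h : x = y
  · subst h; simp
  · rw [if_neg h]
    obtain ⟨k, hk⟩ := Function.ne_iff.mp h
    exact Finset.prod_eq_zero (Finset.mem_univ k) (if_neg hk)

lemma star_tens {n : ℕ} (f : Fin n → M2) :
    star (tens f) = tens fun k => star (f k) := by
  ext x y
  simp [tens, Matrix.star_apply]

lemma sel_tens {n : ℕ} (f : Fin n → M2) (e : Bool) :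
    sel (tens f) e = tens fun k => sel (f k) e := by
  cases e <;> simp [sel, star_tens]

lemma map_prod_tens {α : Type*} {n : ℕ} (g : α → Fin n → M2) (l : List α) :
    (l.map fun a => tens (g a)).prod = tens fun k => (l.map fun a => g a k).prod := by
  induction l with
  | nil => simp [tens_one]
  | cons a l ih => simp [List.prod_cons, ih, tens_mul]

/-- the `k`-th tensor factor of `jw t m n i` -/
def Fm (t : ℝ) (m : ℕ → ℕ → ℝ) (i : ℕ) {n : ℕ} (k : Fin n) : M2 :=
  if (k : ℕ) + 1 < i then sigmaM t (m ((k : ℕ) + 1) i)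
  else if (k : ℕ) + 1 = i then gammaM
  else sigmaM t 1

lemma jw_eq_tens (t : ℝ) (m : ℕ → ℕ → ℝ) (n i : ℕ) :
    jw t m n i = tens (Fm t m i) := by
  ext x y
  simp only [jw, tens, Matrix.of_apply, Fm]

lemma diag2_Fm {t : ℝ} {m : ℕ → ℕ → ℝ} {i n : ℕ} {k : Fin n}
    (h : (k : ℕ) + 1 ≠ i) : Diag2 (Fm t m i k) := by
  unfold Fm
  split_ifs <;> exact diag2_sigma _ _

lemma phiM_tens {n : ℕ} (f : Fin n → M2) :
    phiM n (tens f) = ∏ k, f k 0 0 := rfl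

lemma list_prod_comm {α : Type*} {n : ℕ} (L : List α) (g : α → Fin n → ℝ) :
    (L.map fun p => ∏ k, g p k).prod = ∏ k, (L.map fun p => g p k).prod := by
  induction L with
  | nil => simp
  | cons a L ih => simp [List.prod_cons, ih, Finset.prod_mul_distrib]

end JWAux

open JWAux in
/-- `φ_n` factors over naturally ordered products of the Jordan–Wigner
matrices.  A naturally ordered product is presented as a concatenation of nonempty
blocks of constant index (each block a list of exponents), the block indices being
strictly increasing; `φ_n` of the product equals the product of `φ_n` over the blocks. -/
theorem jordan_wigner_factors (t : ℝ) (ht : 0 < t) (m : ℕ → ℕ → ℝ)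
    (hm : ∀ i j : ℕ, i < j → m i j ≠ 0) (n : ℕ) :
    ∀ L : List (ℕ × List Bool),
      List.Chain' (· < ·) (L.map Prod.fst) →
      (∀ p ∈ L, (1 ≤ p.1 ∧ p.1 ≤ n) ∧ p.2 ≠ []) →
      phiM n ((L.map fun p => (p.2.map (sel (jw t m n p.1))).prod).prod)
        = (L.map fun p => phiM n ((p.2.map (sel (jw t m n p.1))).prod)).prod := by
  intro L hchain _hL
  -- the `k`-th tensor factor of the block with index `p`
  set Bk : ℕ × List Bool → Fin n → M2 :=
    fun p k => (p.2.map fun e => sel (Fm t m p.1 k) e).prod with hBk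
  have hblock : ∀ p : ℕ × List Bool,
      (p.2.map (sel (jw t m n p.1))).prod = tens (Bk p) := by
    intro p
    have hsel : sel (jw t m n p.1)
        = fun e => tens fun k => sel (Fm t m p.1 k) e :=
      funext fun e => by rw [jw_eq_tens, sel_tens]
    rw [hsel]
    exact map_prod_tens (fun e k => sel (Fm t m p.1 k) e) p.2
  -- diagonality of off-index block factors
  have hdiag : ∀ (p : ℕ × List Bool) (k : Fin n), p.1 ≠ (k : ℕ) + 1 → Diag2 (Bk p k) := by
    intro p k hpk
    refine diag2_list_prod fun M hM => ?_
    simp only [hBk, List.mem_map] at hM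
    obtain ⟨e, _, rfl⟩ := hM
    exact diag2_sel (diag2_Fm fun h => hpk h.symm) e
  -- pairwise distinctness of block indices
  have hpw : L.Pairwise fun p q : ℕ × List Bool => p.1 < q.1 := by
    have := List.isChain_iff_pairwise.mp hchain
    exact (List.pairwise_map).mp this
  -- rewrite both sides using the tensor structure
  simp only [hblock]
  rw [map_prod_tens Bk L, phiM_tens]
  have hRHS : (L.map fun p => phiM n (tens (Bk p))).prod
      = ∏ k, (L.map fun p => Bk p k 0 0).prod := by
    simp only [phiM_tens]
    exact list_prod_comm L (fun p k => Bk p k 0 0)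
  rw [hRHS]
  refine Finset.prod_congr rfl fun k _ => ?_
  have hpw' : (L.map fun p => Bk p k).Pairwise fun M N => Diag2 M ∨ Diag2 N := by
    refine List.Pairwise.map _ (fun p q hpq => ?_) hpw
    by_cases hp : p.1 = (k : ℕ) + 1
    · exact Or.inr (hdiag q k (by omega))
    · exact Or.inl (hdiag p k hp)
  rw [prod00 hpw', List.map_map]
  rfl
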